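/- Let C be a perfect field and C ⊆ K a finite Galois extension with group G. If C is K-strongly PAC, then every polynomial f ∈ C[X] that is irreducible over K has degree 1; equivalently, there is no nontrivial algebraic G-equivariant extension of the G-field K: if K ⊂ K' is an algebraic extension with a G-action extending that on K and a ∈ (K')^G \ C, then the minimal polynomial of a over K lies in C[X], is irreducible over K, and has degree > 1. -/

import Mathlib

/-- A field `C` (inside `K`) is `K`-strongly PAC if every affine `C`-variety which is
irreducible over `K` has a `C`-rational point. -/
def KStronglyPAC (C K : Type*) [Field C] [Field K] [Algebra C K] : Prop :=
  ∀ (n : ℕ) (J : Ideal (MvPolynomial (Fin n) C)),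
    (J.map (MvPolynomial.map (algebraMap C K))).IsPrime →
      ∃ x : Fin n → C, ∀ f ∈ J, MvPolynomial.eval x f = 0


section Aux
open Polynomial

noncomputable def e1 (K : Type*) [Field K] : MvPolynomial (Fin 1) K ≃ₐ[K] K[X] :=
  (MvPolynomial.renameEquiv K (Equiv.equivPUnit.{1} (Fin 1))).trans (MvPolynomial.pUnitAlgEquiv.{_,0} K)

lemma e1_aeval (K : Type*) [Field K] (p : K[X]) :
    e1 K (Polynomial.aeval (MvPolynomial.X 0) p) = p := by
  have h : (e1 K).toAlgHom.comp (Polynomial.aeval (MvPolynomial.X 0) : K[X] →ₐ[K] _) =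
      Polynomial.aeval X := by
    apply Polynomial.algHom_ext
    simp [e1, MvPolynomial.pUnitAlgEquiv]
  calc e1 K (Polynomial.aeval (MvPolynomial.X 0) p)
      = ((e1 K).toAlgHom.comp (Polynomial.aeval (MvPolynomial.X 0))) p := rfl
    _ = Polynomial.aeval X p := by rw [h]
    _ = p := by simp [Polynomial.aeval_X_left]


lemma map_aeval_comm (C K : Type*) [Field C] [Field K] [Algebra C K] (f : Polynomial C) :
    MvPolynomial.map (algebraMap C K) (Polynomial.aeval (MvPolynomial.X 0) f) =
      Polynomial.aeval (MvPolynomial.X (0 : Fin 1)) (f.map (algebraMap C K)) := by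
  induction f using Polynomial.induction_on' with
  | add p q hp hq => simp [hp, hq]
  | monomial n a => simp [Polynomial.aeval_monomial, MvPolynomial.algebraMap_eq]

lemma eval_aeval_comm (C : Type*) [Field C] (x : Fin 1 → C) (f : Polynomial C) :
    MvPolynomial.eval x (Polynomial.aeval (MvPolynomial.X 0) f) = Polynomial.eval (x 0) f := by
  induction f using Polynomial.induction_on' with
  | add p q hp hq => simp [hp, hq]
  | monomial n a => simp [Polynomial.aeval_monomial, MvPolynomial.algebraMap_eq]

lemma part1 (C K : Type*) [Field C] [Field K] [Algebra C K]
    (hpac : KStronglyPAC C K)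
    (f : Polynomial C) (hf : Irreducible (f.map (algebraMap C K))) : f.natDegree = 1 := by
  set g : MvPolynomial (Fin 1) C := Polynomial.aeval (MvPolynomial.X 0) f with hg
  set J : Ideal (MvPolynomial (Fin 1) C) := Ideal.span {g} with hJ
  have hmapg : MvPolynomial.map (algebraMap C K) g =
      Polynomial.aeval (MvPolynomial.X 0) (f.map (algebraMap C K)) := by
    rw [hg, map_aeval_comm]
  have hJmap : J.map (MvPolynomial.map (algebraMap C K)) =
      Ideal.span {Polynomial.aeval (MvPolynomial.X 0) (f.map (algebraMap C K))} := by
    rw [hJ, Ideal.map_span, Set.image_singleton, hmapg]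
  have hprime : (J.map (MvPolynomial.map (algebraMap C K))).IsPrime := by
    rw [hJmap]
    have h1 : Irreducible ((Polynomial.aeval (MvPolynomial.X 0)
        (f.map (algebraMap C K)) : MvPolynomial (Fin 1) K)) := by
      have h2 : Irreducible (e1 K (Polynomial.aeval (MvPolynomial.X 0)
          (f.map (algebraMap C K)))) := by rw [e1_aeval]; exact hf
      exact (MulEquiv.irreducible_iff (e1 K).toMulEquiv).mp h2
    rw [Ideal.span_singleton_prime h1.ne_zero]
    exact h1.prime
  obtain ⟨x, hx⟩ := hpac 1 J hprime
  have hroot : Polynomial.eval (x 0) f = 0 := by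
    have h3 := hx g (Ideal.subset_span rfl)
    rw [hg, eval_aeval_comm] at h3
    exact h3
  -- f has root x 0 in C, so map f has root in K; irreducible → degree 1
  have hK : Polynomial.eval (algebraMap C K (x 0)) (f.map (algebraMap C K)) = 0 := by
    rw [Polynomial.eval_map, Polynomial.eval₂_hom, hroot, map_zero]
  have hdvd : (X - Polynomial.C (algebraMap C K (x 0))) ∣ f.map (algebraMap C K) :=
    Polynomial.dvd_iff_isRoot.mpr hK
  obtain ⟨q, hq⟩ := hdvd
  have hqu : IsUnit q := by
    rcases hf.isUnit_or_isUnit hq with h | h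
    · exact absurd h (Polynomial.not_isUnit_X_sub_C _)
    · exact h
  have hdeg : (f.map (algebraMap C K)).natDegree = 1 := by
    rw [hq, Polynomial.natDegree_mul (Polynomial.X_sub_C_ne_zero _) hqu.ne_zero,
      Polynomial.natDegree_X_sub_C, Polynomial.natDegree_eq_zero_of_isUnit hqu]
  rwa [Polynomial.natDegree_map] at hdeg

lemma fixed_mem_bot (C K : Type*) [Field C] [Field K] [Algebra C K]
    [FiniteDimensional C K] [IsGalois C K] (x : K)
    (hx : ∀ g : K ≃ₐ[C] K, g x = x) : x ∈ Set.range (algebraMap C K) := by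
  have h1 : IntermediateField.fixedField (⊤ : Subgroup (K ≃ₐ[C] K)) = ⊥ := by
    rw [← (IntermediateField.fixingSubgroup_bot : (⊥ : IntermediateField C K).fixingSubgroup = ⊤), IsGalois.fixedField_fixingSubgroup]
  rw [← IntermediateField.mem_bot (F := C), ← h1]
  intro g
  exact hx g

lemma part2 (C K : Type*) [Field C] [Field K] [Algebra C K]
    [FiniteDimensional C K] [IsGalois C K]
    (K' : Type*) [Field K'] [Algebra C K'] [Algebra K K'] [IsScalarTower C K K']
    [Algebra.IsAlgebraic K K']
    (ρ : (K ≃ₐ[C] K) →* (K' ≃+* K'))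
    (hcompat : ∀ (g : K ≃ₐ[C] K) (x : K), ρ g (algebraMap K K' x) = algebraMap K K' (g x))
    (a : K') (hfix : ∀ g : K ≃ₐ[C] K, ρ g a = a)
    (hnot : a ∉ Set.range (algebraMap C K')) :
    (∃ f : Polynomial C, f.map (algebraMap C K) = minpoly K a) ∧
      Irreducible (minpoly K a) ∧ 1 < (minpoly K a).natDegree := by
  have hint : IsIntegral K a := (Algebra.IsAlgebraic.isAlgebraic a).isIntegral
  set p := minpoly K a with hp
  -- invariance of p under each g
  have hmap : ∀ g : K ≃ₐ[C] K, p.map (g : K →+* K) = p := by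
    intro g
    have hmon : (p.map (g : K →+* K)).Monic := (minpoly.monic hint).map _
    have hann : Polynomial.aeval a (p.map (g : K →+* K)) = 0 := by
      rw [Polynomial.aeval_def, Polynomial.eval₂_map]
      have hc : ((ρ g : K' ≃+* K') : K' →+* K').comp (algebraMap K K') =
          (algebraMap K K').comp (g : K →+* K) := by
        ext x; exact hcompat g x
      have := Polynomial.hom_eval₂ p (algebraMap K K') ((ρ g : K' ≃+* K') : K' →+* K') a
      rw [hc] at this
      simp only [RingEquiv.coe_toRingHom, hfix g] at this
      rw [← this]
      have h0 : Polynomial.eval₂ (algebraMap K K') a p = 0 := by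
        have := minpoly.aeval K a
        rwa [Polynomial.aeval_def] at this
      rw [h0, map_zero]
    have := minpoly.unique K a hmon hann ?_
    · exact this
    · intro q hq hqa
      rw [Polynomial.degree_map]
      exact minpoly.min K a hq hqa
  -- coefficients fixed, hence in C
  have hcoeff : ∀ n : ℕ, p.coeff n ∈ Set.range (algebraMap C K) := by
    intro n
    apply fixed_mem_bot C K
    intro g
    conv_rhs => rw [← hmap g]
    rw [Polynomial.coeff_map]
    rfl
  obtain ⟨f, hf⟩ := (Polynomial.mem_lifts p).mp
    ((Polynomial.lifts_iff_coeff_lifts p).mpr hcoeff)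
  refine ⟨⟨f, hf⟩, minpoly.irreducible hint, ?_⟩
  have hpos : 0 < p.natDegree := minpoly.natDegree_pos hint
  rcases Nat.lt_or_ge 1 p.natDegree with h | h
  · exact h
  · exfalso
    have hdeg1 : p.natDegree = 1 := le_antisymm h hpos
    have : a ∈ (algebraMap K K').range := by
      rw [← minpoly.degree_eq_one_iff]
      exact (Polynomial.degree_eq_iff_natDegree_eq (minpoly.ne_zero hint)).mpr hdeg1
    obtain ⟨b, hb⟩ := this
    have hbfix : ∀ g : K ≃ₐ[C] K, g b = b := by
      intro g
      have h2 := hcompat g b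
      rw [hb, hfix g] at h2
      exact ((algebraMap K K').injective (hb.trans h2)).symm
    obtain ⟨c, hc⟩ := fixed_mem_bot C K b hbfix
    apply hnot
    exact ⟨c, by rw [IsScalarTower.algebraMap_apply C K K', hc, hb]⟩

end Aux

/-- Let C be perfect, C ⊆ K finite Galois with group G = Gal(K/C), and
C K-strongly PAC. Then every f ∈ C[X] irreducible over K has degree 1; equivalently
there is no nontrivial algebraic G-equivariant extension of K: if K ⊂ K' is algebraic
with a G-action extending that on K and a ∈ (K')^G \ C, then the minimal polynomial
of a over K lies in C[X], is irreducible over K, and has degree > 1. -/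
theorem KStronglyPAC_is_G_closed
    (C K : Type*) [Field C] [Field K] [Algebra C K] [PerfectField C]
    [FiniteDimensional C K] [IsGalois C K]
    (hpac : KStronglyPAC C K) :
    (∀ f : Polynomial C, Irreducible (f.map (algebraMap C K)) → f.natDegree = 1) ∧
      (∀ (K' : Type*) [Field K'] [Algebra C K'] [Algebra K K'] [IsScalarTower C K K']
          [Algebra.IsAlgebraic K K']
          (ρ : (K ≃ₐ[C] K) →* (K' ≃+* K')),
        (∀ (g : K ≃ₐ[C] K) (x : K), ρ g (algebraMap K K' x) = algebraMap K K' (g x)) →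
        ∀ a : K', (∀ g : K ≃ₐ[C] K, ρ g a = a) →
          a ∉ Set.range (algebraMap C K') →
          (∃ f : Polynomial C, f.map (algebraMap C K) = minpoly K a) ∧
            Irreducible (minpoly K a) ∧ 1 < (minpoly K a).natDegree) := by
  refine ⟨fun f hf => part1 C K hpac f hf, ?_⟩
  intro K' _ _ _ _ _ ρ hcompat a hfix hnot
  exact part2 C K K' ρ hcompat a hfix hnot
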